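/- Let B be the group of upper triangular complex n×n matrices with positive real diagonal, and for unitary η ∈ U(n) define Dress_η(b) as the B-factor in the Iwasawa decomposition of ηb (i.e. ηb = Dress_η(b)·u with u unitary). Then Dress defines a group action: Dress_{η₁}(Dress_{η₂}(b)) = Dress_{η₁η₂}(b) for all η₁, η₂ ∈ U(n) and b ∈ B. -/

import Mathlib

open Matrix

/-- Membership in B(n): upper triangular with positive real diagonal. -/
def inBgrp {n : ℕ} (b : Matrix (Fin n) (Fin n) ℂ) : Prop :=
  (∀ i j : Fin n, j < i → b i j = 0) ∧ ∀ i, (b i i).im = 0 ∧ 0 < (b i i).re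

/-- If `b * w = c` with `b, c ∈ B` and `w` unitary, then `w = 1`. -/
theorem unitary_triangular_eq_one {n : ℕ} (b c w : Matrix (Fin n) (Fin n) ℂ)
    (hb : inBgrp b) (hc : inBgrp c) (hw : wᴴ * w = 1) (hbc : b * w = c) : w = 1 := by
  have hbtri : b.BlockTriangular id := fun i j h => hb.1 i j h
  have hctri : c.BlockTriangular id := fun i j h => hc.1 i j h
  -- b is invertible
  have hbdet : IsUnit b.det := by
    have h : b.det = ∏ i, b i i := Matrix.det_of_upperTriangular hbtri
    rw [h, isUnit_iff_ne_zero]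
    refine Finset.prod_ne_zero_iff.mpr fun i _ => ?_
    intro h0
    have := (hb.2 i).2
    rw [h0] at this
    simp at this
  haveI : Invertible b := b.invertibleOfIsUnitDet hbdet
  -- w = b⁻¹ * c is upper triangular
  have hwval : w = b⁻¹ * c := by
    rw [← hbc, Matrix.inv_mul_cancel_left_of_invertible]
  have hwtri : w.BlockTriangular id := by
    rw [hwval]
    exact (Matrix.blockTriangular_inv_of_blockTriangular hbtri).mul hctri
  -- w is invertible with w⁻¹ = wᴴ, which is also upper triangular
  haveI : Invertible w := invertibleOfLeftInverse w wᴴ hw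
  have hwinv : w⁻¹ = wᴴ := Matrix.inv_eq_left_inv hw
  have hwHtri : (wᴴ).BlockTriangular id := by
    rw [← hwinv]
    exact Matrix.blockTriangular_inv_of_blockTriangular hwtri
  -- hence w is diagonal
  have hdiag : ∀ i j : Fin n, i ≠ j → w i j = 0 := by
    intro i j hij
    rcases lt_or_gt_of_ne hij with h | h
    · have h0 : wᴴ j i = 0 := hwHtri h
      rw [Matrix.conjTranspose_apply] at h0
      exact star_eq_zero.mp h0
    · exact hwtri h
  -- diagonal entries: b i i * w i i = c i i
  have hdiagval : ∀ i : Fin n, b i i * w i i = c i i := by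
    intro i
    have hsum : c i i = ∑ k, b i k * w k i := by
      rw [← hbc]; rfl
    rw [hsum, Finset.sum_eq_single i]
    · intro k _ hk
      rcases lt_or_gt_of_ne hk with h | h
      · rw [hb.1 i k h, zero_mul]
      · rw [hdiag k i (ne_of_gt h), mul_zero]
    · intro h; exact absurd (Finset.mem_univ i) h
  -- |w i i|² = 1 from unitarity
  have hnorm : ∀ i : Fin n, star (w i i) * w i i = 1 := by
    intro i
    have h1 : (wᴴ * w) i i = (1 : Matrix (Fin n) (Fin n) ℂ) i i := by rw [hw]
    have h2 : (wᴴ * w) i i = ∑ k, star (w k i) * w k i := by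
      simp [Matrix.mul_apply, Matrix.conjTranspose_apply]
    rw [h2] at h1
    rw [Finset.sum_eq_single i] at h1
    · simpa using h1
    · intro k _ hk
      rw [hdiag k i hk, mul_zero]
    · intro h; exact absurd (Finset.mem_univ i) h
  -- w i i = 1
  have hone : ∀ i : Fin n, w i i = 1 := by
    intro i
    obtain ⟨hbim, hbre⟩ := hb.2 i
    obtain ⟨hcim, hcre⟩ := hc.2 i
    have hd := hdiagval i
    -- w i i is a positive real
    have him : (w i i).im = 0 := by
      have h1 : (b i i * w i i).im = 0 := by rw [hd]; exact hcim
      rw [Complex.mul_im, hbim] at h1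
      simp only [zero_mul, add_zero] at h1
      rcases mul_eq_zero.mp h1 with h | h
      · exact absurd h (ne_of_gt hbre)
      · exact h
    have hre : 0 < (w i i).re := by
      have h1 : (b i i * w i i).re = (c i i).re := by rw [hd]
      rw [Complex.mul_re, hbim, him] at h1
      simp only [mul_zero, zero_mul, sub_zero] at h1
      nlinarith [hbre, hcre]
    have hn := hnorm i
    have hreal : star (w i i) = w i i := by
      rw [Complex.star_def]
      exact Complex.conj_eq_iff_im.mpr him
    rw [hreal] at hn
    have hre2 : (w i i).re * (w i i).re - (w i i).im * (w i i).im = 1 := by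
      have := congrArg Complex.re hn
      simpa [Complex.mul_re] using this
    rw [him] at hre2
    simp only [mul_zero, sub_zero] at hre2
    have hre1 : (w i i).re = 1 := by nlinarith
    exact Complex.ext hre1 (by simp [him])
  ext i j
  by_cases h : i = j
  · subst h; simp [hone i]
  · simp [hdiag i j h, Matrix.one_apply_ne h]

/-- The dressing action is a group action:
Dress_{η₁}(Dress_{η₂}(b)) = Dress_{η₁η₂}(b). -/
theorem dressing_action (n : ℕ) (η₁ η₂ b b₁ u₁ b₂ u₂ b₃ u₃ : Matrix (Fin n) (Fin n) ℂ)
    (hη₁ : η₁ᴴ * η₁ = 1) (hη₂ : η₂ᴴ * η₂ = 1)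
    (hb : inBgrp b) (hb₁ : inBgrp b₁) (hb₂ : inBgrp b₂) (hb₃ : inBgrp b₃)
    (hu₁ : u₁ᴴ * u₁ = 1) (hu₂ : u₂ᴴ * u₂ = 1) (hu₃ : u₃ᴴ * u₃ = 1)
    (h1 : η₂ * b = b₁ * u₁) (h2 : η₁ * b₁ = b₂ * u₂) (h3 : (η₁ * η₂) * b = b₃ * u₃) :
    b₂ = b₃ := by
  have hu₃' : u₃ * u₃ᴴ = 1 := (mul_eq_one_comm).mp hu₃
  -- b₂ * (u₂ * u₁) = b₃ * u₃
  have key : b₂ * (u₂ * u₁) = b₃ * u₃ := by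
    calc b₂ * (u₂ * u₁) = (b₂ * u₂) * u₁ := by rw [mul_assoc]
      _ = (η₁ * b₁) * u₁ := by rw [h2]
      _ = η₁ * (b₁ * u₁) := by rw [mul_assoc]
      _ = η₁ * (η₂ * b) := by rw [h1]
      _ = (η₁ * η₂) * b := by rw [mul_assoc]
      _ = b₃ * u₃ := h3
  set w := u₂ * u₁ * u₃ᴴ with hwdef
  have hbw : b₂ * w = b₃ := by
    rw [hwdef, ← mul_assoc, key, mul_assoc, hu₃', mul_one]
  have hwu : wᴴ * w = 1 := by
    rw [hwdef]
    simp only [Matrix.conjTranspose_mul, Matrix.conjTranspose_conjTranspose]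
    simp only [mul_assoc]
    rw [← mul_assoc u₂ᴴ u₂, hu₂, one_mul, ← mul_assoc u₁ᴴ u₁, hu₁, one_mul, hu₃']
  have hw1 := unitary_triangular_eq_one b₂ b₃ w hb₂ hb₃ hwu hbw
  rw [hw1, mul_one] at hbw
  exact hbw
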